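/- Let m ≥ 5 be odd, h = (m-1)/2, q a prime power, and n = q^m - 1. Then for every integer a with q^{h+1} + 1 ≤ a ≤ q^{h+2}, the q-cyclotomic coset C_a modulo n has cardinality exactly m. -/

import Mathlib

/-- The q-cyclotomic coset of a modulo n: {a * q^j mod n : j ≥ 0}. -/
def cyclCoset (q n a : ℕ) : Finset ℕ :=
  (Finset.range n).image (fun j => a * q ^ j % n)

/-- a is the coset leader (smallest element) of its q-cyclotomic coset modulo n. -/
def IsCosetLeader (q n a : ℕ) : Prop :=
  ∀ j : ℕ, a ≤ a * q ^ j % n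

theorem stmt_2 (q m : ℕ) (hq : IsPrimePow q) (hm : Odd m) (hm5 : 5 ≤ m) (a : ℕ)
    (ha1 : q ^ ((m - 1) / 2 + 1) + 1 ≤ a) (ha2 : a ≤ q ^ ((m - 1) / 2 + 2)) :
    (cyclCoset q (q ^ m - 1) a).card = m := by
  have hq2 : 2 ≤ q := hq.two_le
  set n : ℕ := q ^ m - 1 with hn
  have h2m : 2 ^ m ≤ q ^ m := Nat.pow_le_pow_left hq2 m
  have hm2 : m < 2 ^ m := Nat.lt_two_pow_self
  have hn1 : n + 1 = q ^ m := by omega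
  have hmn : m ≤ n := by omega
  have hm0 : 0 < m := by omega
  have hmod2 : m % 2 = 1 := Nat.odd_iff.mp hm
  have ha0 : 0 < a := by omega
  -- q is coprime to n
  have hcop : Nat.Coprime q n := by
    have h1 : Nat.gcd q n ∣ 1 := by
      have hd : Nat.gcd q n ∣ q ^ m - n :=
        Nat.dvd_sub ((Nat.gcd_dvd_left q n).trans (dvd_pow_self q (by omega)))
          (Nat.gcd_dvd_right q n)
      simpa [show q ^ m - n = 1 by omega] using hd
    exact Nat.dvd_one.mp h1
  -- key arithmetic lemma
  have key : ∀ d : ℕ, d ∣ m → d < m → ¬ (n ∣ a * (q ^ d - 1)) := by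
    intro d hdm hdlt hdvd
    have hd0 : 0 < d := by
      rcases Nat.eq_zero_or_pos d with h | h
      · subst h; exact absurd (Nat.eq_zero_of_zero_dvd hdm) (by omega)
      · exact h
    obtain ⟨k, hk⟩ := hdm
    have hdo : d % 2 = 1 := by
      rcases Nat.odd_mul.mp (hk ▸ hm) with ⟨h1, _⟩; exact Nat.odd_iff.mp h1
    have hko : k % 2 = 1 := by
      rcases Nat.odd_mul.mp (hk ▸ hm) with ⟨_, h2⟩; exact Nat.odd_iff.mp h2
    have hk3 : 3 ≤ k := by
      rcases Nat.lt_or_ge k 3 with h | h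
      · interval_cases k <;> omega
      · exact h
    have h3d : 3 * d ≤ m := by
      calc 3 * d = d * 3 := by ring
      _ ≤ d * k := Nat.mul_le_mul_left d hk3
      _ = m := hk.symm
    have hexp : (m - 1) / 2 + 2 ≤ m - d := by omega
    -- from the divisibility get a > q^(m-d)
    have hq1 : 1 ≤ q ^ d := Nat.one_le_pow _ _ (by omega)
    have hqd2 : 2 ≤ q ^ d := le_trans hq2 (Nat.le_self_pow (by omega) q)
    have hpos : 0 < a * (q ^ d - 1) := Nat.mul_pos ha0 (by omega)
    have hge : n ≤ a * (q ^ d - 1) := Nat.le_of_dvd hpos hdvd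
    have hmd2 : 2 ≤ q ^ (m - d) := le_trans hq2 (Nat.le_self_pow (by omega) q)
    have heq : q ^ (m - d) * (q ^ d - 1) = q ^ m - q ^ (m - d) := by
      rw [Nat.mul_sub, mul_one, ← pow_add]
      congr 2
      omega
    have hlt : q ^ (m - d) * (q ^ d - 1) < a * (q ^ d - 1) := by
      rw [heq]; omega
    have hqa : q ^ (m - d) < a := Nat.lt_of_mul_lt_mul_right hlt
    have hale : a ≤ q ^ (m - d) :=
      le_trans ha2 (Nat.pow_le_pow_right (by omega) hexp)
    omega
  -- the map
  set f : ℕ → ℕ := fun j => a * q ^ j % n with hf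
  have hqm1 : q ^ m ≡ 1 [MOD n] := by
    show q ^ m % n = 1 % n
    rw [← hn1]
    simp [Nat.add_mod_left]
  have hQm : a * q ^ m ≡ a [MOD n] := by
    have := (hqm1.mul_left a)
    simpa using this
  have hcancel : ∀ (i b c : ℕ), b * q ^ i ≡ c * q ^ i [MOD n] → b ≡ c [MOD n] := by
    intro i b c h
    exact h.cancel_right_of_coprime ((hcop.pow_left i).symm)
  -- main injectivity contradiction
  have habs : ∀ i j : ℕ, i < j → j < m → f i = f j → False := by
    intro i j hij hjm hfeq
    have hmeq : a * q ^ i ≡ a * q ^ j [MOD n] := hfeq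
    have hl : a * q ^ (j - i) ≡ a [MOD n] := by
      apply hcancel i
      calc (a * q ^ (j - i)) * q ^ i = a * q ^ j := by
            rw [mul_assoc, ← pow_add]; congr 2; omega
        _ ≡ a * q ^ i [MOD n] := hmeq.symm
    set l := j - i with hldef
    have hl0 : 0 < l := by omega
    have hlm : l < m := by omega
    -- minimal positive period d
    have hex : ∃ t : ℕ, 0 < t ∧ a * q ^ t ≡ a [MOD n] := ⟨l, hl0, hl⟩
    classical
    set d := Nat.find hex with hddef
    obtain ⟨hd0, hQd⟩ := Nat.find_spec hex
    have hdl : d ≤ l := Nat.find_min' hex ⟨hl0, hl⟩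
    have hdown : ∀ t, d ≤ t → a * q ^ t ≡ a [MOD n] → a * q ^ (t - d) ≡ a [MOD n] := by
      intro t hdt hQt
      apply hcancel d
      calc (a * q ^ (t - d)) * q ^ d = a * q ^ t := by
            rw [mul_assoc, ← pow_add]; congr 2; omega
        _ ≡ a [MOD n] := hQt
        _ ≡ a * q ^ d [MOD n] := hQd.symm
    have hmodred : ∀ t, a * q ^ t ≡ a [MOD n] → a * q ^ (t % d) ≡ a [MOD n] := by
      intro t
      induction t using Nat.strong_induction_on with
      | _ t ih =>
        intro hQt
        by_cases hlt : t < d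
        · rwa [Nat.mod_eq_of_lt hlt]
        · push_neg at hlt
          have h1 := ih (t - d) (by omega) (hdown t hlt hQt)
          rwa [Nat.mod_eq_sub_mod hlt]
    have hdm : d ∣ m := by
      have h1 := hmodred m hQm
      by_contra hnd
      have hmd0 : 0 < m % d := Nat.pos_of_ne_zero (fun h => hnd (Nat.dvd_of_mod_eq_zero h))
      have hmdd : m % d < d := Nat.mod_lt _ hd0
      exact Nat.find_min hex hmdd ⟨hmd0, h1⟩
    -- contradiction with key
    apply key d hdm (by omega)
    have hle : a ≤ a * q ^ d := Nat.le_mul_of_pos_right a (Nat.one_le_pow _ _ (by omega))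
    have hdvd := (Nat.modEq_iff_dvd' hle).mp hQd.symm
    have heq2 : a * q ^ d - a = a * (q ^ d - 1) := by
      rw [Nat.mul_sub, mul_one]
    rwa [heq2] at hdvd
  -- periodicity: image over range n equals image over range m
  have hper : ∀ j, f j = f (j % m) := by
    intro j
    show a * q ^ j % n = a * q ^ (j % m) % n
    have : a * q ^ j ≡ a * q ^ (j % m) [MOD n] := by
      conv_lhs => rw [← Nat.div_add_mod j m, pow_add, pow_mul]
      calc a * ((q ^ m) ^ (j / m) * q ^ (j % m))
          ≡ a * (1 ^ (j / m) * q ^ (j % m)) [MOD n] :=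
            ((hqm1.pow (j / m)).mul_right (q ^ (j % m))).mul_left a
        _ = a * q ^ (j % m) := by ring
    exact this
  have himg : (Finset.range n).image f = (Finset.range m).image f := by
    apply Finset.Subset.antisymm
    · intro x hx
      obtain ⟨j, hj, hjx⟩ := Finset.mem_image.mp hx
      exact Finset.mem_image.mpr ⟨j % m, Finset.mem_range.mpr (Nat.mod_lt _ hm0),
        by rw [← hper j]; exact hjx⟩
    · exact Finset.image_subset_image (Finset.range_subset_range.mpr hmn)
  have hinj : Set.InjOn f (Finset.range m) := by
    intro i hi j hj hfeq
    simp only [Finset.coe_range, Set.mem_Iio] at hi hj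
    rcases lt_trichotomy i j with h | h | h
    · exact absurd (habs i j h hj hfeq) (fun x => x)
    · exact h
    · exact absurd (habs j i h hi hfeq.symm) (fun x => x)
  show ((Finset.range n).image f).card = m
  rw [himg, Finset.card_image_of_injOn hinj, Finset.card_range]
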